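/- For a ∈ ℂ and a finitely supported family Ω = (μ_k)_{k∈ℤ} of complex numbers, the bilinear map Υ^a_Ω on W(a,1) defined by Υ^a_Ω(L_m, L_n) = Σ_k (m+n+k+a)·μ_k·I_{m+n+k} and Υ^a_Ω(L_m, I_n) = Υ^a_Ω(I_n, L_m) = Υ^a_Ω(I_m, I_n) = 0 is a symmetric biderivation of W(a,1). -/

import Mathlib

/-- `f` is a biderivation: a derivation in each argument. -/
def IsBiderivation {W : Type*} [LieRing W] (f : W → W → W) : Prop :=
  (∀ x y z : W, f ⁅x, y⁆ z = ⁅x, f y z⁆ + ⁅f x z, y⁆) ∧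
  (∀ x y z : W, f x ⁅y, z⁆ = ⁅f x y, z⁆ + ⁅y, f x z⁆)

/-- A model of the Lie algebra `W(a,b)`: a complex Lie algebra with a basis
`{L m, I m | m : ℤ}` satisfying the defining bracket relations. -/
structure IsWab (a b : ℂ) (W : Type*) [LieRing W] [LieAlgebra ℂ W]
    (L I : ℤ → W) : Prop where
  bracket_LL : ∀ m n : ℤ, ⁅L m, L n⁆ = ((m - n : ℤ) : ℂ) • L (m + n)
  bracket_LI : ∀ m n : ℤ, ⁅L m, I n⁆ = (-((n : ℂ) + a + b * (m : ℂ))) • I (m + n)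
  bracket_II : ∀ m n : ℤ, ⁅I m, I n⁆ = 0
  basis : ∃ B : Module.Basis (ℤ ⊕ ℤ) ℂ W,
    (∀ m : ℤ, B (Sum.inl m) = L m) ∧ (∀ m : ℤ, B (Sum.inr m) = I m)

/-- The map `Υ^a_Ω` (given on the basis by
`Υ^a_Ω(L m, L n) = Σ_k (m+n+k+a) μ_k I (m+n+k)` and zero on other basis pairs)
is a symmetric biderivation of `W(a,1)`. -/
theorem upsilon_symmetric_biderivation (a : ℂ) (Ω : ℤ →₀ ℂ) {W : Type*}
    [LieRing W] [LieAlgebra ℂ W] (L I : ℤ → W) (hW : IsWab a 1 W L I)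
    (f : W →ₗ[ℂ] W →ₗ[ℂ] W)
    (hLL : ∀ m n : ℤ, f (L m) (L n) =
      Ω.sum fun k c => ((((m + n + k : ℤ) : ℂ) + a) * c) • I (m + n + k))
    (hLI : ∀ m n : ℤ, f (L m) (I n) = 0)
    (hIL : ∀ m n : ℤ, f (I n) (L m) = 0)
    (hII : ∀ m n : ℤ, f (I m) (I n) = 0) :
    (∀ x y : W, f x y = f y x) ∧ IsBiderivation (fun x y => f x y) := by
  obtain ⟨B, hBL, hBI⟩ := hW.basis
  -- bracket of I with L
  have hIL' : ∀ m n : ℤ, ⁅I n, L m⁆ = ((n : ℂ) + a + 1 * (m : ℂ)) • I (m + n) := by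
    intro m n
    rw [← lie_skew, hW.bracket_LI, neg_smul, neg_neg]
  -- brackets with finsupp sums
  have hsumR : ∀ (w : W) (g : ℤ → ℂ → W),
      ⁅w, Ω.sum g⁆ = Ω.sum fun k c => ⁅w, g k c⁆ := by
    intro w g
    have h := map_finsuppSum (LieAlgebra.ad ℂ W w) Ω g
    simpa [LieAlgebra.ad_apply] using h
  have hsumL : ∀ (w : W) (g : ℤ → ℂ → W),
      ⁅Ω.sum g, w⁆ = Ω.sum fun k c => ⁅g k c, w⁆ := by
    intro w g
    have h := map_finsuppSum (-(LieAlgebra.ad ℂ W w)) Ω g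
    simp only [LinearMap.neg_apply, LieAlgebra.ad_apply, lie_skew] at h
    exact h
  -- symmetry
  have hsymm : f = f.flip := by
    refine B.ext fun i => B.ext fun j => ?_
    rw [LinearMap.flip_apply]
    rcases i with m | m <;> rcases j with n | n <;>
      simp only [hBL, hBI, hLL, hLI, hIL, hII]
    simp only [show n + m = m + n from add_comm n m]
  -- first derivation law, in bundled form
  have key1 : (LinearMap.mk₂ ℂ (fun x y => f ⁅x, y⁆)
        (fun x x' y => by simp [add_lie])
        (fun c x y => by simp [smul_lie])
        (fun x y y' => by simp [lie_add])
        (fun c x y => by simp [lie_smul])) =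
      (LinearMap.mk₂ ℂ (fun x y =>
          (LieAlgebra.ad ℂ W x).comp (f y) - (LieAlgebra.ad ℂ W y).comp (f x))
        (fun x x' y => by
          ext z; simp [LieAlgebra.ad_apply, add_lie]; abel)
        (fun c x y => by
          ext z; simp [LieAlgebra.ad_apply, smul_lie, smul_sub])
        (fun x y y' => by
          ext z; simp [LieAlgebra.ad_apply, add_lie]; abel)
        (fun c x y => by
          ext z; simp [LieAlgebra.ad_apply, smul_lie, smul_sub])) := by
    refine B.ext fun i => B.ext fun j => B.ext fun k => ?_
    simp only [LinearMap.mk₂_apply, LinearMap.sub_apply, LinearMap.comp_apply,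
      LieAlgebra.ad_apply]
    rcases i with m | m <;> rcases j with n | n <;> rcases k with p | p <;>
      simp only [hBL, hBI, hW.bracket_LL, hW.bracket_LI, hW.bracket_II, hIL',
        map_smul, LinearMap.smul_apply, hLL, hLI, hIL, hII, hsumR, hsumL,
        lie_smul, smul_lie, map_zero, LinearMap.zero_apply, smul_zero, lie_zero,
        zero_lie, sub_zero, zero_sub, neg_zero, sub_self, neg_neg]
    · -- L L L
      rw [Finsupp.smul_sum]
      simp only [Finsupp.sum, ← Finset.sum_sub_distrib]
      refine Finset.sum_congr rfl fun k hk => ?_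
      simp only [smul_smul]
      rw [show m + (n + p + k) = m + n + p + k from by ring,
          show n + (m + p + k) = m + n + p + k from by ring,
          ← sub_smul]
      congr 1
      push_cast
      ring
    all_goals simp [Finsupp.sum]
  -- second derivation law, in bundled form
  have key2 : (LinearMap.mk₂ ℂ (fun x y => (f x).comp (LieAlgebra.ad ℂ W y))
        (fun x x' y => by ext z; simp)
        (fun c x y => by ext z; simp)
        (fun x y y' => by ext z; simp [LieAlgebra.ad_apply, add_lie])
        (fun c x y => by ext z; simp [LieAlgebra.ad_apply, smul_lie])) =
      (LinearMap.mk₂ ℂ (fun x y =>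
          LieAlgebra.ad ℂ W (f x y) + (LieAlgebra.ad ℂ W y).comp (f x))
        (fun x x' y => by
          ext z; simp [LieAlgebra.ad_apply, add_lie]; abel)
        (fun c x y => by
          ext z; simp [LieAlgebra.ad_apply, smul_lie, smul_add])
        (fun x y y' => by
          ext z; simp [LieAlgebra.ad_apply, add_lie]; abel)
        (fun c x y => by
          ext z; simp [LieAlgebra.ad_apply, smul_lie, smul_add])) := by
    refine B.ext fun i => B.ext fun j => B.ext fun k => ?_
    simp only [LinearMap.mk₂_apply, LinearMap.add_apply, LinearMap.comp_apply,
      LieAlgebra.ad_apply]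
    rcases i with m | m <;> rcases j with n | n <;> rcases k with p | p <;>
      simp only [hBL, hBI, hW.bracket_LL, hW.bracket_LI, hW.bracket_II, hIL',
        map_smul, LinearMap.smul_apply, hLL, hLI, hIL, hII, hsumR, hsumL,
        lie_smul, smul_lie, map_zero, LinearMap.zero_apply, smul_zero, lie_zero,
        zero_lie, add_zero, zero_add, neg_neg]
    · -- L L L
      rw [Finsupp.smul_sum]
      simp only [Finsupp.sum, ← Finset.sum_add_distrib]
      refine Finset.sum_congr rfl fun k hk => ?_
      simp only [smul_smul]
      rw [show m + (n + p) + k = m + n + p + k from by ring,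
          show p + (m + n + k) = m + n + p + k from by ring,
          show n + (m + p + k) = m + n + p + k from by ring,
          ← add_smul]
      congr 1
      push_cast
      ring
    all_goals simp [Finsupp.sum]
  refine ⟨fun x y => ?_, fun x y z => ?_, fun x y z => ?_⟩
  · exact DFunLike.congr_fun (DFunLike.congr_fun hsymm x) y
  · have h := DFunLike.congr_fun (DFunLike.congr_fun
      (DFunLike.congr_fun key1 x) y) z
    simp only [LinearMap.mk₂_apply, LinearMap.sub_apply, LinearMap.comp_apply,
      LieAlgebra.ad_apply] at h
    show f ⁅x, y⁆ z = ⁅x, f y z⁆ + ⁅f x z, y⁆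
    rw [h, sub_eq_add_neg, lie_skew]
  · have h := DFunLike.congr_fun (DFunLike.congr_fun
      (DFunLike.congr_fun key2 x) y) z
    simp only [LinearMap.mk₂_apply, LinearMap.add_apply, LinearMap.comp_apply,
      LieAlgebra.ad_apply] at h
    exact h
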